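/- Let G be a group, let g ≥ 4, and let a_1,…,a_{g−1}, u_1 be elements of G satisfying: a_i a_j = a_j a_i for |i−j|>1; a_i a_{i+1} a_i = a_{i+1} a_i a_{i+1} for i=1,…,g−2; and u_1 a_i = a_i u_1 for i=3,…,g−1. Set M = a_1 a_2 ⋯ a_{g−1}. Then for every k with 2 ≤ k ≤ g−2, the element a_1 commutes with M^k u_1 M^{−k} if and only if a_1 commutes with M^2 u_1 M^{−2}. -/

import Mathlib

private lemma comm_list_prod {G : Type*} [Group G] (x : G) (l : List G)
    (h : ∀ y ∈ l, x * y = y * x) : x * l.prod = l.prod * x := by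
  induction l with
  | nil => simp
  | cons y t ih =>
    simp only [List.prod_cons]
    rw [← mul_assoc, h y List.mem_cons_self, mul_assoc,
      ih (fun z hz => h z (List.mem_cons_of_mem y hz)), ← mul_assoc]

private lemma comm_conj_iff {G : Type*} [Group G] {x w z : G} (hw : x * w = w * x) :
    x * (w * z * w⁻¹) = (w * z * w⁻¹) * x ↔ x * z = z * x := by
  have hcw : Commute x w := hw
  constructor
  · intro h
    have hc : Commute x (w * z * w⁻¹) := h
    have h2 : Commute x (w⁻¹ * (w * z * w⁻¹) * w) :=
      (hcw.inv_right.mul_right hc).mul_right hcw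
    have h3 : w⁻¹ * (w * z * w⁻¹) * w = z := by group
    rw [h3] at h2
    exact h2
  · intro h
    exact ((hcw.mul_right (show Commute x z from h)).mul_right hcw.inv_right)

private lemma range'_split (s m n : ℕ) :
    List.range' s (m + n) = List.range' s m ++ List.range' (s + m) n := by
  rw [← @List.range'_append s m n 1, one_mul]

/-- the commutation of `a₁` with `Mᵏ u₁ M⁻ᵏ` reduces to the case `k = 2`. -/
theorem stmt_11 {G : Type*} [Group G] (g : ℕ) (hg : 4 ≤ g) (a : ℕ → G) (u1 : G)
    (hA1 : ∀ i j, 1 ≤ i → j ≤ g - 1 → i + 1 < j → a i * a j = a j * a i)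
    (hA2 : ∀ i, 1 ≤ i → i ≤ g - 2 → a i * a (i + 1) * a i = a (i + 1) * a i * a (i + 1))
    (hC1' : ∀ i, 3 ≤ i → i ≤ g - 1 → u1 * a i = a i * u1)
    (M : G) (hM : M = ((List.range' 1 (g - 1)).map a).prod) :
    ∀ k, 2 ≤ k → k ≤ g - 2 →
      (a 1 * (M ^ k * u1 * (M ^ k)⁻¹) = (M ^ k * u1 * (M ^ k)⁻¹) * a 1 ↔
        a 1 * (M ^ 2 * u1 * (M ^ 2)⁻¹) = (M ^ 2 * u1 * (M ^ 2)⁻¹) * a 1) := by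
  -- Step 1 : M * a i = a (i+1) * M for 1 ≤ i ≤ g-2
  have hM1 : ∀ i, 1 ≤ i → i ≤ g - 2 → M * a i = a (i + 1) * M := by
    intro i hi1 hi2
    obtain ⟨p, rfl⟩ : ∃ p, i = p + 1 := ⟨i - 1, by omega⟩
    obtain ⟨r, hr⟩ : ∃ r, g - 1 = p + (2 + r) := ⟨g - 3 - p, by omega⟩
    have hsplit : List.range' 1 (g - 1)
        = List.range' 1 p ++ ([p + 1, p + 2] ++ List.range' (p + 3) r) := by
      rw [hr, range'_split 1 p (2 + r), range'_split (1 + p) 2 r]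
      have h1 : List.range' (1 + p) 2 = [p + 1, p + 2] := by
        simp [List.range']; omega
      rw [h1, show 1 + p + 2 = p + 3 by omega]
    set P := ((List.range' 1 p).map a).prod with hP'
    set S := ((List.range' (p + 3) r).map a).prod with hS'
    have hMeq : M = P * (a (p + 1) * (a (p + 2) * S)) := by
      rw [hM, hsplit]
      simp [List.prod_append, mul_assoc, hP', hS']
    have hS : a (p + 1) * S = S * a (p + 1) := by
      apply comm_list_prod
      intro y hy
      simp only [List.mem_map, List.mem_range'_1] at hy
      obtain ⟨j, hj, rfl⟩ := hy
      exact hA1 (p + 1) j (by omega) (by omega) (by omega)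
    have hP : a (p + 2) * P = P * a (p + 2) := by
      apply comm_list_prod
      intro y hy
      simp only [List.mem_map, List.mem_range'_1] at hy
      obtain ⟨j, hj, rfl⟩ := hy
      exact (hA1 j (p + 2) (by omega) (by omega) (by omega)).symm
    have hb : a (p + 1) * (a (p + 2) * (a (p + 1) * S))
        = a (p + 2) * (a (p + 1) * (a (p + 2) * S)) := by
      have h := hA2 (p + 1) (by omega) (by omega)
      calc a (p + 1) * (a (p + 2) * (a (p + 1) * S))
          = a (p + 1) * a (p + 2) * a (p + 1) * S := by simp [mul_assoc]
        _ = a (p + 2) * a (p + 1) * a (p + 2) * S := by rw [h]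
        _ = a (p + 2) * (a (p + 1) * (a (p + 2) * S)) := by simp [mul_assoc]
    rw [hMeq]
    calc P * (a (p + 1) * (a (p + 2) * S)) * a (p + 1)
        = P * (a (p + 1) * (a (p + 2) * (S * a (p + 1)))) := by simp [mul_assoc]
      _ = P * (a (p + 1) * (a (p + 2) * (a (p + 1) * S))) := by rw [← hS]
      _ = P * (a (p + 2) * (a (p + 1) * (a (p + 2) * S))) := by rw [hb]
      _ = P * a (p + 2) * (a (p + 1) * (a (p + 2) * S)) := by rw [mul_assoc]
      _ = a (p + 2) * P * (a (p + 1) * (a (p + 2) * S)) := by rw [← hP]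
      _ = a (p + 1 + 1) * (P * (a (p + 1) * (a (p + 2) * S))) := by rw [mul_assoc]
  -- Step 2 : M * u1 * M⁻¹ = a 1 * a 2 * u1 * (a 2)⁻¹ * (a 1)⁻¹
  have hMu : M * u1 * M⁻¹ = a 1 * a 2 * u1 * (a 2)⁻¹ * (a 1)⁻¹ := by
    have hsplit : List.range' 1 (g - 1) = [1, 2] ++ List.range' 3 (g - 3) := by
      have : g - 1 = 2 + (g - 3) := by omega
      rw [this, range'_split 1 2 (g - 3)]
      rfl
    set T := ((List.range' 3 (g - 3)).map a).prod with hT'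
    have hMeq : M = a 1 * (a 2 * T) := by
      rw [hM, hsplit]; simp [List.prod_append, mul_assoc, hT']
    have hT : u1 * T = T * u1 := by
      apply comm_list_prod
      intro y hy
      simp only [List.mem_map, List.mem_range'_1] at hy
      obtain ⟨j, hj, rfl⟩ := hy
      exact hC1' j (by omega) (by omega)
    have key : M * u1 = a 1 * a 2 * u1 * (a 2)⁻¹ * (a 1)⁻¹ * M := by
      rw [hMeq]
      simp only [mul_assoc, inv_mul_cancel_left]
      rw [← hT]
    rw [key]
    simp [mul_assoc]
  -- Step 3 : shifting a word of generators through M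
  have hshift : ∀ L : List ℕ, (∀ m ∈ L, 1 ≤ m ∧ m ≤ g - 2) →
      M * ((L.map a).prod) = (((L.map (· + 1)).map a).prod) * M := by
    intro L
    induction L with
    | nil => simp
    | cons m t ih =>
      intro h
      simp only [List.map_cons, List.prod_cons]
      have hm := h m List.mem_cons_self
      rw [← mul_assoc, hM1 m hm.1 hm.2, mul_assoc,
        ih (fun x hx => h x (List.mem_cons_of_mem m hx)), ← mul_assoc]
  -- Step 4 : M^j u1 M^{-j} is a conjugate of u1 by a word in a 1, ..., a (j+1)
  have hrep : ∀ j : ℕ, j + 4 ≤ g → ∃ L : List ℕ,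
      (∀ m ∈ L, 1 ≤ m ∧ m ≤ j + 1) ∧
      M ^ j * u1 * (M ^ j)⁻¹ = (L.map a).prod * u1 * ((L.map a).prod)⁻¹ := by
    intro j
    induction j with
    | zero => intro _; exact ⟨[], by simp, by simp⟩
    | succ j ih =>
      intro hj
      obtain ⟨L, hL, hE⟩ := ih (by omega)
      have hbound : ∀ m ∈ L, 1 ≤ m ∧ m ≤ g - 2 := by
        intro m hm; have := hL m hm; omega
      refine ⟨L.map (· + 1) ++ [1, 2], ?_, ?_⟩
      · intro m hm
        simp only [List.mem_append, List.mem_map, List.mem_cons, List.mem_singleton] at hm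
        rcases hm with ⟨x, hx, rfl⟩ | rfl | rfl | h
        · have := hL x hx; omega
        · omega
        · omega
        · exact absurd h List.not_mem_nil
      · set V := (L.map a).prod with hV'
        set W := ((L.map (· + 1)).map a).prod with hW'
        have hMV : M * V = W * M := hshift L hbound
        have hinv : V⁻¹ * M⁻¹ = M⁻¹ * W⁻¹ := by
          rw [← mul_inv_rev, hMV, mul_inv_rev]
        have e : M ^ (j + 1) * u1 * (M ^ (j + 1))⁻¹
            = M * (M ^ j * u1 * (M ^ j)⁻¹) * M⁻¹ := by
          rw [pow_succ']
          simp [mul_inv_rev, mul_assoc]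
        have eprod : (((L.map (· + 1) ++ [1, 2]).map a).prod) = W * (a 1 * a 2) := by
          rw [List.map_append, List.prod_append]
          congr 1
          simp
        rw [e, hE, eprod]
        calc M * (V * u1 * V⁻¹) * M⁻¹
            = (M * V) * u1 * (V⁻¹ * M⁻¹) := by simp [mul_assoc]
          _ = (W * M) * u1 * (M⁻¹ * W⁻¹) := by rw [hMV, hinv]
          _ = W * (M * u1 * M⁻¹) * W⁻¹ := by simp [mul_assoc]
          _ = W * (a 1 * a 2 * u1 * (a 2)⁻¹ * (a 1)⁻¹) * W⁻¹ := by rw [hMu]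
          _ = W * (a 1 * a 2) * u1 * (W * (a 1 * a 2))⁻¹ := by
              simp [mul_inv_rev, mul_assoc]
  -- Step 5 : conclusion
  intro k hk2 hkg
  obtain ⟨j, rfl⟩ : ∃ j, k = j + 2 := ⟨k - 2, by omega⟩
  obtain ⟨L, hL, hE⟩ := hrep j (by omega)
  set V := (L.map a).prod with hV'
  set V1 := ((L.map (· + 1)).map a).prod with hV1'
  set V2 := (((L.map (· + 1)).map (· + 1)).map a).prod with hV2'
  have hb1 : ∀ m ∈ L, 1 ≤ m ∧ m ≤ g - 2 := by
    intro m hm; have := hL m hm; omega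
  have hb2 : ∀ m ∈ L.map (· + 1), 1 ≤ m ∧ m ≤ g - 2 := by
    intro m hm
    simp only [List.mem_map] at hm
    obtain ⟨x, hx, rfl⟩ := hm
    have := hL x hx; omega
  have hM2V : M ^ 2 * V = V2 * M ^ 2 := by
    have h1 := hshift L hb1
    have h2 := hshift (L.map (· + 1)) hb2
    calc M ^ 2 * V = M * (M * V) := by rw [pow_two, mul_assoc]
      _ = M * (V1 * M) := by rw [h1]
      _ = (M * V1) * M := by rw [mul_assoc]
      _ = (V2 * M) * M := by rw [h2]
      _ = V2 * M ^ 2 := by rw [pow_two, mul_assoc]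
  have hinv2 : V⁻¹ * (M ^ 2)⁻¹ = (M ^ 2)⁻¹ * V2⁻¹ := by
    rw [← mul_inv_rev, hM2V, mul_inv_rev]
  have hMk : M ^ (j + 2) * u1 * (M ^ (j + 2))⁻¹
      = V2 * (M ^ 2 * u1 * (M ^ 2)⁻¹) * V2⁻¹ := by
    have hpow : M ^ (j + 2) = M ^ 2 * M ^ j := by
      rw [← pow_add]; ring_nf
    calc M ^ (j + 2) * u1 * (M ^ (j + 2))⁻¹
        = M ^ 2 * (M ^ j * u1 * (M ^ j)⁻¹) * (M ^ 2)⁻¹ := by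
          rw [hpow]; simp [mul_inv_rev, mul_assoc]
      _ = M ^ 2 * (V * u1 * V⁻¹) * (M ^ 2)⁻¹ := by rw [hE]
      _ = (M ^ 2 * V) * u1 * (V⁻¹ * (M ^ 2)⁻¹) := by simp [mul_assoc]
      _ = (V2 * M ^ 2) * u1 * ((M ^ 2)⁻¹ * V2⁻¹) := by rw [hM2V, hinv2]
      _ = V2 * (M ^ 2 * u1 * (M ^ 2)⁻¹) * V2⁻¹ := by simp [mul_assoc]
  have hcW : a 1 * V2 = V2 * a 1 := by
    apply comm_list_prod
    intro y hy
    simp only [List.mem_map] at hy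
    obtain ⟨x, ⟨z, ⟨m, hm, rfl⟩, rfl⟩, rfl⟩ := hy
    have := hL m hm
    exact hA1 1 (m + 1 + 1) (by omega) (by omega) (by omega)
  rw [hMk]
  exact comm_conj_iff hcW
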